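/- (Filippov-type existence for sampled-data control) Fix a partition 𝕋 of [0,T] and consider minimizing C(x,u) = ∫_0^T L(x(s),u(s),s) ds over x ∈ AC([0,T],ℝ^n), u piecewise constant on 𝕋 with values in U, ẋ = f(x,u,t) a.e., x(0) = x_0, x(T) = x_T. If the admissible set A_𝕋 is nonempty, U is compact, and there exists R > 0 with ‖x‖_C ≤ R for all admissible pairs, then the problem has at least one solution — with no convexity assumption on the velocity sets. -/

import Mathlib

open MeasureTheory Set Filter Topology

set_option maxHeartbeats 1000000
set_option synthInstance.maxHeartbeats 400000

/-- Filippov-type existence for the sampled-data optimal control problem (OCP_𝕋):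
with controls piecewise constant on a fixed partition 𝕋 and values in a compact set `U`,
if the admissible set is nonempty and admissible states are uniformly bounded, then an
optimal solution exists — with no convexity assumption on the velocity sets. -/
theorem stmt_9 (T : ℝ) (hT : 0 < T) (n m : ℕ) (hn : 0 < n) (hm : 0 < m)
    (x0 xT : EuclideanSpace ℝ (Fin n))
    (U : Set (EuclideanSpace ℝ (Fin m))) (hUne : U.Nonempty)
    (hUconvex : Convex ℝ U) (hUcompact : IsCompact U)
    (f : EuclideanSpace ℝ (Fin n) → EuclideanSpace ℝ (Fin m) → ℝ → EuclideanSpace ℝ (Fin n))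
    (L : EuclideanSpace ℝ (Fin n) → EuclideanSpace ℝ (Fin m) → ℝ → ℝ)
    (hf : ContDiff ℝ 2 (fun q : EuclideanSpace ℝ (Fin n) × EuclideanSpace ℝ (Fin m) × ℝ =>
      f q.1 q.2.1 q.2.2))
    (hL : ContDiff ℝ 2 (fun q : EuclideanSpace ℝ (Fin n) × EuclideanSpace ℝ (Fin m) × ℝ =>
      L q.1 q.2.1 q.2.2))
    -- the partition 𝕋 = {t_i}
    (N : ℕ) (hN : 0 < N) (t : ℕ → ℝ) (ht0 : t 0 = 0) (htN : t N = T)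
    (htmono : ∀ i < N, t i < t (i + 1))
    -- the set of admissible pairs with piecewise constant control on 𝕋
    (Adm : (ℝ → EuclideanSpace ℝ (Fin n)) → (ℝ → EuclideanSpace ℝ (Fin m)) → Prop)
    (hAdm : ∀ x u, Adm x u ↔
      ((∀ i < N, ∀ s ∈ Ico (t i) (t (i + 1)), u s = u (t i)) ∧
       (∀ s ∈ Icc (0:ℝ) T, u s ∈ U) ∧
       IntegrableOn (fun s => f (x s) (u s) s) (Icc 0 T) ∧
       (∀ τ ∈ Icc (0:ℝ) T, x τ = x0 + ∫ s in (0:ℝ)..τ, f (x s) (u s) s) ∧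
       x T = xT))
    (hne : ∃ x u, Adm x u)
    (R : ℝ) (hR : 0 < R)
    (hbound : ∀ x u, Adm x u → ∀ τ ∈ Icc (0:ℝ) T, ‖x τ‖ ≤ R) :
    ∃ x u, Adm x u ∧ ∀ y v, Adm y v →
      (∫ s in (0:ℝ)..T, L (x s) (u s) s) ≤ ∫ s in (0:ℝ)..T, L (y s) (v s) s := by
  classical
  have hfc : Continuous (fun q : EuclideanSpace ℝ (Fin n) × EuclideanSpace ℝ (Fin m) × ℝ =>
      f q.1 q.2.1 q.2.2) := hf.continuous
  have hLc : Continuous (fun q : EuclideanSpace ℝ (Fin n) × EuclideanSpace ℝ (Fin m) × ℝ =>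
      L q.1 q.2.1 q.2.2) := hL.continuous
  haveI hfin : IsFiniteMeasure (volume.restrict (Icc (0:ℝ) T)) := by
    constructor
    rw [Measure.restrict_apply_univ]
    simp [Real.volume_Icc]
  -- partition facts
  have tmono : ∀ j, j ≤ N → ∀ i, i ≤ j → t i ≤ t j := by
    intro j
    induction j with
    | zero => intro _ i hi; simp [Nat.le_zero.mp hi]
    | succ j ih =>
      intro hj i hi
      rcases eq_or_lt_of_le hi with h | h
      · rw [h]
      · exact le_trans (ih (by omega) i (by omega)) (htmono j (by omega)).le
  have ht_mem : ∀ i, i ≤ N → t i ∈ Icc (0:ℝ) T := by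
    intro i hi
    constructor
    · rw [← ht0]; exact tmono i hi 0 (Nat.zero_le _)
    · rw [← htN]; exact tmono N le_rfl i hi
  have piece_unique : ∀ i, i < N → ∀ j, j < N → ∀ s : ℝ,
      s ∈ Ico (t i) (t (i+1)) → s ∈ Ico (t j) (t (j+1)) → i = j := by
    have key : ∀ i j, ∀ s : ℝ, i < N → j < N → i < j →
        s ∈ Ico (t i) (t (i+1)) → s ∈ Ico (t j) (t (j+1)) → False := by
      intro i j s hi hj hij h1 h2
      have h3 : t (i+1) ≤ t j := tmono j (by omega) (i+1) (by omega)
      have := h1.2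
      have := h2.1
      linarith
    intro i hi j hj s h1 h2
    rcases lt_trichotomy i j with h | h | h
    · exact (key i j s hi hj h h1 h2).elim
    · exact h
    · exact ((key j i s hj hi h h2 h1).elim)
  have cover : ∀ s ∈ Ico (0:ℝ) T, ∃ i, i < N ∧ s ∈ Ico (t i) (t (i+1)) := by
    intro s hs
    have hPN : s < t N := by rw [htN]; exact hs.2
    have hex : ∃ k, s < t k := ⟨N, hPN⟩
    have hkN : Nat.find hex ≤ N := Nat.find_le hPN
    have hk0 : Nat.find hex ≠ 0 := by
      intro h
      have := Nat.find_spec hex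
      rw [h, ht0] at this
      exact absurd hs.1 (not_le.mpr this)
    have hks : s < t (Nat.find hex) := Nat.find_spec hex
    have hprev : ¬ s < t (Nat.find hex - 1) := Nat.find_min hex (by omega)
    refine ⟨Nat.find hex - 1, by omega, not_lt.mp hprev, ?_⟩
    have h1 : Nat.find hex - 1 + 1 = Nat.find hex := by omega
    rw [h1]; exact hks
  -- bounds on f and L on the relevant compact set
  have hKcomp : IsCompact ((Metric.closedBall (0 : EuclideanSpace ℝ (Fin n)) R) ×ˢ
      (U ×ˢ Icc (0:ℝ) T)) :=
    (isCompact_closedBall _ _).prod (hUcompact.prod isCompact_Icc)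
  obtain ⟨M0, hM0⟩ := hKcomp.exists_bound_of_continuousOn hfc.continuousOn
  obtain ⟨KL0, hKL0⟩ := hKcomp.exists_bound_of_continuousOn hLc.continuousOn
  set M : ℝ := max M0 0 with hMdef
  set KL : ℝ := max KL0 0 with hKLdef
  have hMf : ∀ (a : EuclideanSpace ℝ (Fin n)) (b : EuclideanSpace ℝ (Fin m)) (s : ℝ),
      ‖a‖ ≤ R → b ∈ U → s ∈ Icc (0:ℝ) T → ‖f a b s‖ ≤ M := by
    intro a b s ha hb hs
    exact le_trans (hM0 (a, b, s) ⟨mem_closedBall_zero_iff.mpr ha, hb, hs⟩) (le_max_left _ _)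
  have hML : ∀ (a : EuclideanSpace ℝ (Fin n)) (b : EuclideanSpace ℝ (Fin m)) (s : ℝ),
      ‖a‖ ≤ R → b ∈ U → s ∈ Icc (0:ℝ) T → ‖L a b s‖ ≤ KL := by
    intro a b s ha hb hs
    exact le_trans (hKL0 (a, b, s) ⟨mem_closedBall_zero_iff.mpr ha, hb, hs⟩) (le_max_left _ _)
  -- continuity of admissible trajectories
  have xcont : ∀ x u, Adm x u → ContinuousOn x (Icc (0:ℝ) T) := by
    intro x u hxu
    obtain ⟨hpc, hUm, hint, heq, hxT⟩ := (hAdm x u).1 hxu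
    have h1 : ContinuousOn (fun τ => x0 + ∫ s in (0:ℝ)..τ, f (x s) (u s) s) (Icc (0:ℝ) T) := by
      apply continuousOn_const.add
      have h2 := intervalIntegral.continuousOn_primitive_interval (a := (0:ℝ)) (b := T)
        (μ := volume) (f := fun s => f (x s) (u s) s) (by rwa [uIcc_of_le hT.le])
      rwa [uIcc_of_le hT.le] at h2
    exact h1.congr heq
  -- measurability of piecewise-constant controls
  have humeas : ∀ u : ℝ → EuclideanSpace ℝ (Fin m),
      (∀ i < N, ∀ s ∈ Ico (t i) (t (i + 1)), u s = u (t i)) →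
      AEStronglyMeasurable u (volume.restrict (Icc (0:ℝ) T)) := by
    intro u hpc
    have hvm : AEStronglyMeasurable
        (fun s => ∑ i ∈ Finset.range N, (Ico (t i) (t (i+1))).indicator
          (fun _ => u (t i)) s) (volume.restrict (Icc (0:ℝ) T)) := by
      apply Measurable.aestronglyMeasurable
      apply Finset.measurable_sum
      intro i _
      exact measurable_const.indicator measurableSet_Ico
    apply hvm.congr
    have hT' : ∀ᵐ s ∂(volume.restrict (Icc (0:ℝ) T)), s ≠ T := by
      rw [ae_iff]
      have h1 : {a : ℝ | ¬ a ≠ T} = {T} := by ext a; simp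
      rw [h1, Measure.restrict_apply (measurableSet_singleton T)]
      exact measure_mono_null inter_subset_left (by simp)
    filter_upwards [hT', ae_restrict_mem measurableSet_Icc] with s hsT hsIcc
    have hs' : s ∈ Ico (0:ℝ) T := ⟨hsIcc.1, lt_of_le_of_ne hsIcc.2 hsT⟩
    obtain ⟨i, hiN, hsi⟩ := cover s hs'
    have h2 : (∑ j ∈ Finset.range N, (Ico (t j) (t (j+1))).indicator (fun _ => u (t j)) s)
        = u (t i) := by
      rw [Finset.sum_eq_single i]
      · exact indicator_of_mem hsi _
      · intro j hj hji
        exact indicator_of_notMem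
          (fun hsj => hji (piece_unique j (Finset.mem_range.mp hj) i hiN s hsj hsi)) _
      · intro h; exact absurd (Finset.mem_range.mpr hiN) h
    rw [h2, hpc i hiN s hsi]
  have phimeas : ∀ (x : ℝ → EuclideanSpace ℝ (Fin n)) (u : ℝ → EuclideanSpace ℝ (Fin m)),
      ContinuousOn x (Icc (0:ℝ) T) →
      (∀ i < N, ∀ s ∈ Ico (t i) (t (i + 1)), u s = u (t i)) →
      AEStronglyMeasurable (fun s => ((x s, u s, s) :
        EuclideanSpace ℝ (Fin n) × EuclideanSpace ℝ (Fin m) × ℝ))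
        (volume.restrict (Icc (0:ℝ) T)) := by
    intro x u hx hu
    exact (hx.aestronglyMeasurable measurableSet_Icc).prodMk
      ((humeas u hu).prodMk aestronglyMeasurable_id)
  have Lmeas : ∀ x u, Adm x u → AEStronglyMeasurable (fun s => L (x s) (u s) s)
      (volume.restrict (Icc (0:ℝ) T)) := by
    intro x u h
    exact hLc.comp_aestronglyMeasurable (phimeas x u (xcont x u h) ((hAdm x u).1 h).1)
  have hsubT : uIoc (0:ℝ) T ⊆ Icc (0:ℝ) T := by
    rw [uIoc_of_le hT.le]; exact Ioc_subset_Icc_self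
  -- lower bound on the cost
  have costLB : ∀ x u, Adm x u → -(KL * T) ≤ ∫ s in (0:ℝ)..T, L (x s) (u s) s := by
    intro x u h
    obtain ⟨hpc, hUm, hint, heq, hxT⟩ := (hAdm x u).1 h
    have h1 : ‖∫ s in (0:ℝ)..T, L (x s) (u s) s‖ ≤ KL * |T - 0| := by
      apply intervalIntegral.norm_integral_le_of_norm_le_const
      intro s hs
      have hs' : s ∈ Icc (0:ℝ) T := hsubT hs
      exact hML _ _ _ (hbound x u h s hs') (hUm s hs') hs'
    rw [sub_zero, abs_of_pos hT, Real.norm_eq_abs] at h1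
    have := abs_le.mp h1
    linarith [this.1]
  -- the infimum of costs
  set S : Set ℝ := {c | ∃ x u, Adm x u ∧ (∫ s in (0:ℝ)..T, L (x s) (u s) s) = c} with hSdef
  have hSne : S.Nonempty := by
    obtain ⟨x, u, h⟩ := hne
    exact ⟨_, x, u, h, rfl⟩
  have hSbdd : BddBelow S := by
    refine ⟨-(KL * T), ?_⟩
    rintro cc ⟨x, u, hxu, rfl⟩
    exact costLB x u hxu
  -- minimizing sequence
  have hmin : ∀ k : ℕ, ∃ p : (ℝ → EuclideanSpace ℝ (Fin n)) × (ℝ → EuclideanSpace ℝ (Fin m)),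
      Adm p.1 p.2 ∧ (∫ s in (0:ℝ)..T, L (p.1 s) (p.2 s) s) < sInf S + ((k:ℝ)+1)⁻¹ := by
    intro k
    obtain ⟨a, ⟨x, u, hxu, ha⟩, hlt⟩ :=
      Real.lt_sInf_add_pos hSne (ε := ((k:ℝ)+1)⁻¹) (by positivity)
    exact ⟨(x, u), hxu, by rw [ha]; exact hlt⟩
  choose P hPadm hPcost using hmin
  -- compactness of controls
  have hVmemU : ∀ k (i : Fin N), (P k).2 (t i) ∈ U := by
    intro k i
    exact ((hAdm _ _).1 (hPadm k)).2.1 (t i) (ht_mem i i.2.le)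
  obtain ⟨c, hcU, φ, hφ, hφconv⟩ :=
    (isCompact_univ_pi (fun _ : Fin N => hUcompact)).tendsto_subseq
      (x := fun k => fun i : Fin N => (P k).2 (t i))
      (fun k => Set.mem_univ_pi.mpr (fun i => hVmemU k i))
  have hcU' : ∀ i : Fin N, c i ∈ U := fun i => Set.mem_univ_pi.mp hcU i
  have hccomp : ∀ i : Fin N, Tendsto (fun k => (P (φ k)).2 (t i)) atTop (𝓝 (c i)) := by
    intro i
    exact tendsto_pi_nhds.mp hφconv i
  -- equi-Lipschitz property of trajectories
  have hXlip : ∀ x u, Adm x u → ∀ σ ∈ Icc (0:ℝ) T, ∀ τ ∈ Icc (0:ℝ) T,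
      ‖x τ - x σ‖ ≤ M * |τ - σ| := by
    intro x u h σ hσ τ hτ
    obtain ⟨hpc, hUm, hint, heq, hxT⟩ := (hAdm x u).1 h
    have hii : ∀ a b : ℝ, a ∈ Icc (0:ℝ) T → b ∈ Icc (0:ℝ) T →
        IntervalIntegrable (fun s => f (x s) (u s) s) volume a b := by
      intro a b ha hb
      exact (hint.mono_set (uIcc_subset_Icc ha hb)).intervalIntegrable
    have h0T : (0:ℝ) ∈ Icc (0:ℝ) T := ⟨le_refl _, hT.le⟩
    have h1 : x τ - x σ = ∫ s in σ..τ, f (x s) (u s) s := by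
      rw [heq τ hτ, heq σ hσ, add_sub_add_left_eq_sub]
      exact intervalIntegral.integral_interval_sub_left (hii 0 τ h0T hτ) (hii 0 σ h0T hσ)
    rw [h1]
    apply intervalIntegral.norm_integral_le_of_norm_le_const
    intro s hs
    have hs' : s ∈ Icc (0:ℝ) T := uIcc_subset_Icc hσ hτ (uIoc_subset_uIcc hs)
    exact hMf _ _ _ (hbound x u h s hs') (hUm s hs') hs'
  -- Arzelà–Ascoli
  haveI : CompactSpace (Icc (0:ℝ) T) := isCompact_iff_compactSpace.mp isCompact_Icc
  set Y : ℕ → BoundedContinuousFunction (Icc (0:ℝ) T) (EuclideanSpace ℝ (Fin n)) := fun k =>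
    BoundedContinuousFunction.mkOfCompact
      ⟨(Icc (0:ℝ) T).restrict (P k).1,
        continuousOn_iff_continuous_restrict.mp (xcont _ _ (hPadm k))⟩ with hYdef
  have hAA : IsCompact (closure (Set.range Y)) := by
    apply BoundedContinuousFunction.arzela_ascoli
      (Metric.closedBall (0 : EuclideanSpace ℝ (Fin n)) R) (isCompact_closedBall _ _)
    · intro g pt hg
      obtain ⟨k, rfl⟩ := hg
      exact mem_closedBall_zero_iff.mpr (hbound _ _ (hPadm k) pt pt.2)
    · apply Metric.equicontinuous_of_continuity_modulus (fun d => M * d)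
      · have h1 : Continuous fun d : ℝ => M * d := continuous_const.mul continuous_id
        simpa using h1.tendsto 0
      · rintro p q ⟨g, hg⟩
        obtain ⟨k, rfl⟩ := hg
        show dist (Y k p) (Y k q) ≤ M * dist p q
        rw [dist_eq_norm, Subtype.dist_eq, Real.dist_eq]
        exact hXlip _ _ (hPadm k) q q.2 p p.2
  obtain ⟨Z, hZmem, ψ, hψ, hZconv⟩ :=
    hAA.tendsto_subseq (x := fun k => Y (φ k)) (fun k => subset_closure (mem_range_self _))
  set θ : ℕ → ℕ := φ ∘ ψ with hθdef
  have hθmono : StrictMono θ := hφ.comp hψ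
  have hconvU : ∀ i : Fin N, Tendsto (fun k => (P (θ k)).2 (t i)) atTop (𝓝 (c i)) :=
    fun i => (hccomp i).comp hψ.tendsto_atTop
  have hconvX : ∀ (τ : ℝ) (h : τ ∈ Icc (0:ℝ) T),
      Tendsto (fun k => (P (θ k)).1 τ) atTop (𝓝 (Z ⟨τ, h⟩)) := by
    intro τ h
    have hdist : Tendsto (fun k => dist (Y (θ k)) Z) atTop (𝓝 0) :=
      tendsto_iff_dist_tendsto_zero.mp hZconv
    apply tendsto_iff_dist_tendsto_zero.mpr
    apply squeeze_zero (fun k => dist_nonneg)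
      (fun k => BoundedContinuousFunction.dist_coe_le_dist (f := Y (θ k)) (g := Z) ⟨τ, h⟩)
      hdist
  -- limit pair
  set xlim : ℝ → EuclideanSpace ℝ (Fin n) := fun s =>
    if h : s ∈ Icc (0:ℝ) T then Z ⟨s, h⟩ else x0 with hxlimdef
  set ulim : ℝ → EuclideanSpace ℝ (Fin m) := fun s =>
    if h : ∃ i : Fin N, s ∈ Ico (t i.val) (t (i.val + 1)) then c h.choose else c ⟨0, hN⟩
    with hulimdef
  have hxlimval : ∀ τ (h : τ ∈ Icc (0:ℝ) T), xlim τ = Z ⟨τ, h⟩ := fun τ h => dif_pos h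
  have hulimval : ∀ (i : Fin N) (s : ℝ), s ∈ Ico (t i.val) (t (i.val + 1)) → ulim s = c i := by
    intro i s hs
    have hex : ∃ j : Fin N, s ∈ Ico (t j.val) (t (j.val + 1)) := ⟨i, hs⟩
    have h1 : ulim s = c hex.choose := dif_pos hex
    rw [h1]
    exact congrArg c (Fin.ext (piece_unique _ hex.choose.2 _ i.2 s hex.choose_spec hs))
  have hulimpc : ∀ i < N, ∀ s ∈ Ico (t i) (t (i + 1)), ulim s = ulim (t i) := by
    intro i hi s hs
    rw [hulimval ⟨i, hi⟩ s hs, hulimval ⟨i, hi⟩ (t i) ⟨le_refl _, htmono i hi⟩]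
  have hulimU : ∀ s, ulim s ∈ U := by
    intro s
    rw [hulimdef]
    dsimp only
    split
    · exact hcU' _
    · exact hcU' _
  have hconvu : ∀ s ∈ Ico (0:ℝ) T, Tendsto (fun k => (P (θ k)).2 s) atTop (𝓝 (ulim s)) := by
    intro s hs
    obtain ⟨i, hiN, hsi⟩ := cover s hs
    have h1 : ∀ k, (P (θ k)).2 s = (P (θ k)).2 (t i) :=
      fun k => ((hAdm _ _).1 (hPadm (θ k))).1 i hiN s hsi
    rw [hulimval ⟨i, hiN⟩ s hsi]
    exact Tendsto.congr (fun k => (h1 k).symm) (hconvU ⟨i, hiN⟩)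
  have hxlimcont : ContinuousOn xlim (Icc (0:ℝ) T) := by
    rw [continuousOn_iff_continuous_restrict]
    have h1 : (Icc (0:ℝ) T).restrict xlim = Z := by
      funext p
      exact dif_pos p.2
    rw [show (Icc (0:ℝ) T).domRestrict xlim = Z from h1]
    exact Z.continuous
  have hxlimR : ∀ τ ∈ Icc (0:ℝ) T, ‖xlim τ‖ ≤ R := by
    intro τ h
    rw [hxlimval τ h]
    exact le_of_tendsto (hconvX τ h).norm
      (Eventually.of_forall fun k => hbound _ _ (hPadm (θ k)) τ h)
  have hlimmeas : AEStronglyMeasurable (fun s => ((xlim s, ulim s, s) :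
      EuclideanSpace ℝ (Fin n) × EuclideanSpace ℝ (Fin m) × ℝ))
      (volume.restrict (Icc (0:ℝ) T)) := phimeas xlim ulim hxlimcont hulimpc
  have hflimint : IntegrableOn (fun s => f (xlim s) (ulim s) s) (Icc (0:ℝ) T) := by
    constructor
    · exact hfc.comp_aestronglyMeasurable hlimmeas
    · apply HasFiniteIntegral.of_bounded (C := M)
      filter_upwards [ae_restrict_mem measurableSet_Icc] with s hs
      exact hMf _ _ _ (hxlimR s hs) (hulimU s) hs
  have haeT : ∀ᵐ s : ℝ ∂volume, s ≠ T := by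
    rw [ae_iff]
    have h1 : {a : ℝ | ¬ a ≠ T} = {T} := by ext a; simp
    rw [h1]
    exact Real.volume_singleton
  -- passing to the limit in the dynamics
  have hkey : ∀ τ ∈ Icc (0:ℝ) T,
      Tendsto (fun k => ∫ s in (0:ℝ)..τ, f ((P (θ k)).1 s) ((P (θ k)).2 s) s) atTop
        (𝓝 (∫ s in (0:ℝ)..τ, f (xlim s) (ulim s) s)) := by
    intro τ hτ
    have hsubτ : uIoc (0:ℝ) τ ⊆ Icc (0:ℝ) T := by
      rw [uIoc_of_le hτ.1]
      exact fun s hs => ⟨hs.1.le, hs.2.trans hτ.2⟩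
    apply intervalIntegral.tendsto_integral_filter_of_dominated_convergence (bound := fun _ => M)
    · apply Eventually.of_forall
      intro k
      exact (((hAdm _ _).1 (hPadm (θ k))).2.2.1).1.mono_measure
        (Measure.restrict_mono hsubτ le_rfl)
    · apply Eventually.of_forall
      intro k
      apply Eventually.of_forall
      intro s hs
      have hs' : s ∈ Icc (0:ℝ) T := hsubτ hs
      exact hMf _ _ _ (hbound _ _ (hPadm (θ k)) s hs')
        (((hAdm _ _).1 (hPadm (θ k))).2.1 s hs') hs'
    · exact intervalIntegrable_const
    · filter_upwards [haeT] with s hsT hsI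
      have hsIcc : s ∈ Icc (0:ℝ) T := hsubτ hsI
      have hsIco : s ∈ Ico (0:ℝ) T := ⟨hsIcc.1, lt_of_le_of_ne hsIcc.2 hsT⟩
      have h1 : Tendsto (fun k => (((P (θ k)).1 s, (P (θ k)).2 s, s) :
          EuclideanSpace ℝ (Fin n) × EuclideanSpace ℝ (Fin m) × ℝ)) atTop
          (𝓝 (xlim s, ulim s, s)) := by
        have hx1 : Tendsto (fun k => (P (θ k)).1 s) atTop (𝓝 (xlim s)) := by
          rw [hxlimval s hsIcc]; exact hconvX s hsIcc
        exact hx1.prodMk_nhds ((hconvu s hsIco).prodMk_nhds tendsto_const_nhds)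
      exact (hfc.tendsto _).comp h1
  have hinteq : ∀ τ ∈ Icc (0:ℝ) T, xlim τ = x0 + ∫ s in (0:ℝ)..τ, f (xlim s) (ulim s) s := by
    intro τ hτ
    have h1 : Tendsto (fun k => (P (θ k)).1 τ) atTop (𝓝 (xlim τ)) := by
      rw [hxlimval τ hτ]; exact hconvX τ hτ
    have h3 : Tendsto (fun k => x0 + ∫ s in (0:ℝ)..τ, f ((P (θ k)).1 s) ((P (θ k)).2 s) s)
        atTop (𝓝 (x0 + ∫ s in (0:ℝ)..τ, f (xlim s) (ulim s) s)) :=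
      tendsto_const_nhds.add (hkey τ hτ)
    have h2 : Tendsto (fun k => (P (θ k)).1 τ) atTop
        (𝓝 (x0 + ∫ s in (0:ℝ)..τ, f (xlim s) (ulim s) s)) :=
      Tendsto.congr (fun k => (((hAdm _ _).1 (hPadm (θ k))).2.2.2.1 τ hτ).symm) h3
    exact tendsto_nhds_unique h1 h2
  have hxlimT : xlim T = xT := by
    have h1 : Tendsto (fun k => (P (θ k)).1 T) atTop (𝓝 (xlim T)) := by
      rw [hxlimval T ⟨hT.le, le_refl T⟩]; exact hconvX T ⟨hT.le, le_refl T⟩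
    have h2 : ∀ k, (P (θ k)).1 T = xT := fun k => ((hAdm _ _).1 (hPadm (θ k))).2.2.2.2
    exact tendsto_nhds_unique (Tendsto.congr h2 h1) tendsto_const_nhds
  have hAdmLim : Adm xlim ulim :=
    (hAdm _ _).2 ⟨hulimpc, fun s _ => hulimU s, hflimint, hinteq, hxlimT⟩
  -- convergence of the costs
  have hcostconv : Tendsto (fun k => ∫ s in (0:ℝ)..T, L ((P (θ k)).1 s) ((P (θ k)).2 s) s) atTop
      (𝓝 (∫ s in (0:ℝ)..T, L (xlim s) (ulim s) s)) := by
    apply intervalIntegral.tendsto_integral_filter_of_dominated_convergence (bound := fun _ => KL)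
    · apply Eventually.of_forall
      intro k
      exact (Lmeas _ _ (hPadm (θ k))).mono_measure (Measure.restrict_mono hsubT le_rfl)
    · apply Eventually.of_forall
      intro k
      apply Eventually.of_forall
      intro s hs
      have hs' : s ∈ Icc (0:ℝ) T := hsubT hs
      exact hML _ _ _ (hbound _ _ (hPadm (θ k)) s hs')
        (((hAdm _ _).1 (hPadm (θ k))).2.1 s hs') hs'
    · exact intervalIntegrable_const
    · filter_upwards [haeT] with s hsT hsI
      have hsIcc : s ∈ Icc (0:ℝ) T := hsubT hsI
      have hsIco : s ∈ Ico (0:ℝ) T := ⟨hsIcc.1, lt_of_le_of_ne hsIcc.2 hsT⟩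
      have h1 : Tendsto (fun k => (((P (θ k)).1 s, (P (θ k)).2 s, s) :
          EuclideanSpace ℝ (Fin n) × EuclideanSpace ℝ (Fin m) × ℝ)) atTop
          (𝓝 (xlim s, ulim s, s)) := by
        have hx1 : Tendsto (fun k => (P (θ k)).1 s) atTop (𝓝 (xlim s)) := by
          rw [hxlimval s hsIcc]; exact hconvX s hsIcc
        exact hx1.prodMk_nhds ((hconvu s hsIco).prodMk_nhds tendsto_const_nhds)
      exact (hLc.tendsto _).comp h1
  have hcost_lower : ∀ k, sInf S ≤ ∫ s in (0:ℝ)..T, L ((P (θ k)).1 s) ((P (θ k)).2 s) s :=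
    fun k => csInf_le hSbdd ⟨_, _, hPadm (θ k), rfl⟩
  have hto : Tendsto (fun k => ∫ s in (0:ℝ)..T, L ((P (θ k)).1 s) ((P (θ k)).2 s) s) atTop
      (𝓝 (sInf S)) := by
    apply tendsto_of_tendsto_of_tendsto_of_le_of_le (g := fun _ => sInf S)
      (h := fun k => sInf S + ((θ k : ℝ) + 1)⁻¹) tendsto_const_nhds
    · have h4 : Tendsto (fun k => ((θ k : ℝ) + 1)⁻¹) atTop (𝓝 0) := by
        apply tendsto_inv_atTop_zero.comp
        apply tendsto_atTop_add_const_right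
        exact tendsto_natCast_atTop_atTop.comp hθmono.tendsto_atTop
      simpa using tendsto_const_nhds.add h4
    · exact hcost_lower
    · exact fun k => (hPcost (θ k)).le
  have hfinal : (∫ s in (0:ℝ)..T, L (xlim s) (ulim s) s) = sInf S :=
    tendsto_nhds_unique hcostconv hto
  refine ⟨xlim, ulim, hAdmLim, ?_⟩
  intro y v hyv
  rw [hfinal]
  exact csInf_le hSbdd ⟨y, v, hyv, rfl⟩
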